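/- Unit property of the composition of orientations. For a finite-dimensional real vector space A, define the identity orientation datum (A, A, 0, μ^id_A) where μ^id_A := (−1)^{a(a+1)/2} β ∧ α, a = dim A, and β and α are the orientations of the two copies of A determined by a common orientation of A (the result is independent of that choice). (Left unit) Let (A₂, B₂, C₂, μ₂) be orientation data, π : A₂ → B₂ a linear map, and f : A₂ → A₂ ⊕ B₂ given by f(x) = (x, −π(x)). Then ker(f) = 0, the map A₂ ⊕ B₂ → B₂, (a, b) ↦ b + π(a), induces an isomorphism coker(f) ≅ B₂, and under these identifications μ₂ ∘_f μ^id_{A₂} = μ₂ as orientations of B₂ ⊕ A₂ ⊕ C₂. (Right unit) Let (A₁, B₁, C₁, μ₁) be orientation data, A' a finite-dimensional real vector space, π : A' → B₁ a linear map, and f : A' → B₁ ⊕ A' given by f(x) = (π(x), −x). Then ker(f) = 0, the map B₁ ⊕ A' → B₁, (b, a) ↦ b + π(a), induces an isomorphism coker(f) ≅ B₁, and under these identifications μ^id_{A'} ∘_f μ₁ = μ₁ as orientations of B₁ ⊕ A₁ ⊕ C₁. -/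

import Mathlib

open Module

noncomputable section

/-- The concatenation of a basis of `V` and a basis of `W`, as a basis of `V × W`.
On orientations this realizes the wedge `ω ∧ ω'` of orientations. -/
def prodBasis {V W : Type*} [AddCommGroup V] [Module ℝ V]
    [AddCommGroup W] [Module ℝ W] {m n : ℕ}
    (bv : Basis (Fin m) ℝ V) (bw : Basis (Fin n) ℝ W) :
    Basis (Fin (m + n)) ℝ (V × W) :=
  (bv.prod bw).reindex finSumFinEquiv

/-- Given orientation data `(Aᵢ, Bᵢ, Cᵢ, μᵢ)` for `i = 1, 2` and a linear map
`f : A₂ → B₁ ⊕ B₂`, the proposition that the orientation `ν` of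
`coker f ⊕ A₁ ⊕ (C₁ ⊕ C₂ ⊕ ker f)` is obtained from some system of choices as in the
definition of the composite orientation `μ₂ ∘_f μ₁`. -/
def IsCompositeOrientation
    {A₁ B₁ C₁ A₂ B₂ C₂ : Type*}
    [AddCommGroup A₁] [Module ℝ A₁] [AddCommGroup B₁] [Module ℝ B₁]
    [AddCommGroup C₁] [Module ℝ C₁] [AddCommGroup A₂] [Module ℝ A₂]
    [AddCommGroup B₂] [Module ℝ B₂] [AddCommGroup C₂] [Module ℝ C₂]
    {na₁ nb₁ nc₁ na₂ nb₂ nc₂ nk ncok : ℕ}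
    (f : A₂ →ₗ[ℝ] B₁ × B₂)
    (μ₁ : Orientation ℝ (B₁ × (A₁ × C₁)) (Fin (nb₁ + (na₁ + nc₁))))
    (μ₂ : Orientation ℝ (B₂ × (A₂ × C₂)) (Fin (nb₂ + (na₂ + nc₂))))
    (ν : Orientation ℝ
      (((B₁ × B₂) ⧸ LinearMap.range f) × (A₁ × (C₁ × (C₂ × ↥(LinearMap.ker f)))))
      (Fin (ncok + (na₁ + (nc₁ + (nc₂ + nk)))))) : Prop :=
  ∃ (a₁ : Basis (Fin na₁) ℝ A₁) (b₁ : Basis (Fin nb₁) ℝ B₁)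
    (c₁ : Basis (Fin nc₁) ℝ C₁) (a₂ : Basis (Fin na₂) ℝ A₂)
    (b₂ : Basis (Fin nb₂) ℝ B₂) (c₂ : Basis (Fin nc₂) ℝ C₂)
    (dl : Basis (Fin (finrank ℝ ↥(LinearMap.range f))) ℝ ↥(LinearMap.range f))
    (e : Basis (Fin ncok) ℝ ((B₁ × B₂) ⧸ LinearMap.range f))
    (z : Basis (Fin nk) ℝ ↥(LinearMap.ker f))
    (F : (↥(LinearMap.range f) × ((B₁ × B₂) ⧸ LinearMap.range f)) ≃ₗ[ℝ] B₁ × B₂)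
    (G : (↥(LinearMap.ker f) × ↥(LinearMap.range f)) ≃ₗ[ℝ] A₂)
    (hFi : finrank ℝ ↥(LinearMap.range f) + ncok = nb₁ + nb₂)
    (hGi : nk + finrank ℝ ↥(LinearMap.range f) = na₂),
    (∀ x : ↥(LinearMap.range f), F (x, 0) = (x : B₁ × B₂)) ∧
    (∀ y : (B₁ × B₂) ⧸ LinearMap.range f,
      Submodule.mkQ (LinearMap.range f) (F (0, y)) = y) ∧
    (∀ x : ↥(LinearMap.ker f), G (x, 0) = (x : A₂)) ∧
    (∀ y : ↥(LinearMap.range f), f (G (0, y)) = (y : B₁ × B₂)) ∧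
    μ₁ = (prodBasis b₁ (prodBasis a₁ c₁)).orientation ∧
    μ₂ = (prodBasis b₂ (prodBasis a₂ c₂)).orientation ∧
    Orientation.reindex ℝ _ (finCongr hFi) ((prodBasis dl e).map F).orientation =
      (prodBasis b₁ b₂).orientation ∧
    Orientation.reindex ℝ _ (finCongr hGi) ((prodBasis z dl).map G).orientation =
      a₂.orientation ∧
    ν = (if (nb₁ * na₂ + nb₁ * nc₂ + na₂ * nc₂ +
            finrank ℝ ↥(LinearMap.range f) * (finrank ℝ ↥(LinearMap.range f) - 1) / 2) % 2 = 0
      then (prodBasis e (prodBasis a₁ (prodBasis c₁ (prodBasis c₂ z)))).orientation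
      else -(prodBasis e (prodBasis a₁ (prodBasis c₁ (prodBasis c₂ z)))).orientation)

/-- The identity orientation datum on `A` is `(A, A, 0, μ^id_A)`, where
`μ^id_A = (−1)^{a(a+1)/2} β ∧ α` with `β`, `α` the orientations of the two copies of `A`
determined by a common orientation (here realized by a common basis). -/
def IsIdOrientation {A : Type*} [AddCommGroup A] [Module ℝ A] {n nc : ℕ}
    (μ : Orientation ℝ (A × (A × PUnit)) (Fin (n + (n + nc)))) : Prop :=
  ∃ (b : Basis (Fin n) ℝ A) (c : Basis (Fin nc) ℝ PUnit),
    μ = (if (n * (n + 1) / 2) % 2 = 0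
      then (prodBasis b (prodBasis b c)).orientation
      else -(prodBasis b (prodBasis b c)).orientation)
section Toolkit

theorem det_empty {M : Type*} [AddCommGroup M] [Module ℝ M]
    (b : Basis (Fin 0) ℝ M) (v : Fin 0 → M) : b.det v = 1 := by
  rw [Basis.det_isEmpty]; rfl

variable {V W : Type*} [AddCommGroup V] [Module ℝ V] [AddCommGroup W] [Module ℝ W]
  {m n : ℕ} (bv : Basis (Fin m) ℝ V) (bw : Basis (Fin n) ℝ W)

theorem prodBasis_castAdd (i : Fin m) : prodBasis bv bw (Fin.castAdd n i) = (bv i, 0) := by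
  simp only [prodBasis, Basis.coe_reindex, Function.comp_apply,
    finSumFinEquiv_symm_apply_castAdd]
  ext
  · exact Basis.prod_apply_inl_fst _ _ _
  · exact Basis.prod_apply_inl_snd _ _ _

theorem prodBasis_natAdd (j : Fin n) : prodBasis bv bw (Fin.natAdd m j) = (0, bw j) := by
  simp only [prodBasis, Basis.coe_reindex, Function.comp_apply,
    finSumFinEquiv_symm_apply_natAdd]
  ext
  · exact Basis.prod_apply_inr_fst _ _ _
  · exact Basis.prod_apply_inr_snd _ _ _

theorem prodBasis_of_lt (k : Fin (m + n)) (h : (k : ℕ) < m) :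
    prodBasis bv bw k = (bv ⟨k, h⟩, 0) := by
  have hk : k = Fin.castAdd n ⟨k, h⟩ := by ext; rfl
  conv_lhs => rw [hk]
  rw [prodBasis_castAdd]

theorem prodBasis_of_ge (k : Fin (m + n)) (h : m ≤ (k : ℕ)) :
    prodBasis bv bw k = (0, bw ⟨(k : ℕ) - m, by omega⟩) := by
  have hk : k = Fin.natAdd m ⟨(k : ℕ) - m, by omega⟩ := by ext; simp; omega
  conv_lhs => rw [hk]
  rw [prodBasis_natAdd]

/-- block-triangular determinant: left block has vanishing second components. -/
theorem prodBasis_det_block₁ (v : Fin (m + n) → V × W)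
    (h : ∀ i : Fin m, (v (Fin.castAdd n i)).2 = 0) :
    (prodBasis bv bw).det v =
      bv.det (fun i => (v (Fin.castAdd n i)).1) * bw.det (fun j => (v (Fin.natAdd m j)).2) := by
  rw [prodBasis, Basis.det_reindex, Basis.det_apply, Basis.det_apply, Basis.det_apply]
  have hm : (bv.prod bw).toMatrix (v ∘ finSumFinEquiv) =
      Matrix.fromBlocks (bv.toMatrix (fun i => (v (Fin.castAdd n i)).1))
        (bv.toMatrix (fun j => (v (Fin.natAdd m j)).1)) 0
        (bw.toMatrix (fun j => (v (Fin.natAdd m j)).2)) := by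
    ext i j
    cases i with
    | inl i =>
      cases j with
      | inl j => simp [Basis.toMatrix_apply, Basis.prod_repr_inl]
      | inr j => simp [Basis.toMatrix_apply, Basis.prod_repr_inl]
    | inr i =>
      cases j with
      | inl j => simp [Basis.toMatrix_apply, Basis.prod_repr_inr, h]
      | inr j => simp [Basis.toMatrix_apply, Basis.prod_repr_inr]
  rw [hm, Matrix.det_fromBlocks_zero₂₁]

/-- block-triangular determinant: right block has vanishing first components. -/
theorem prodBasis_det_block₂ (v : Fin (m + n) → V × W)
    (h : ∀ j : Fin n, (v (Fin.natAdd m j)).1 = 0) :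
    (prodBasis bv bw).det v =
      bv.det (fun i => (v (Fin.castAdd n i)).1) * bw.det (fun j => (v (Fin.natAdd m j)).2) := by
  rw [prodBasis, Basis.det_reindex, Basis.det_apply, Basis.det_apply, Basis.det_apply]
  have hm : (bv.prod bw).toMatrix (v ∘ finSumFinEquiv) =
      Matrix.fromBlocks (bv.toMatrix (fun i => (v (Fin.castAdd n i)).1))
        0 (bw.toMatrix (fun i => (v (Fin.castAdd n i)).2))
        (bw.toMatrix (fun j => (v (Fin.natAdd m j)).2)) := by
    ext i j
    cases i with
    | inl i =>
      cases j with
      | inl j => simp [Basis.toMatrix_apply, Basis.prod_repr_inl]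
      | inr j => simp [Basis.toMatrix_apply, Basis.prod_repr_inl, h]
    | inr i =>
      cases j with
      | inl j => simp [Basis.toMatrix_apply, Basis.prod_repr_inr]
      | inr j => simp [Basis.toMatrix_apply, Basis.prod_repr_inr]
  rw [hm, Matrix.det_fromBlocks_zero₁₂]

-- orientation = neg iff det negative
theorem orientation_eq_neg_iff_det_neg {M : Type*} [AddCommGroup M] [Module ℝ M] {n : ℕ}
    (e₁ e₂ : Basis (Fin n) ℝ M) :
    e₁.orientation = -e₂.orientation ↔ e₁.det e₂ < 0 := by
  rw [← Basis.orientation_ne_iff_eq_neg, Ne, Basis.orientation_eq_iff_det_pos]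
  have h := (e₁.isUnit_det e₂).ne_zero
  constructor
  · intro h'; cases lt_or_gt_of_ne h with
    | inl hlt => exact hlt
    | inr hgt => exact absurd hgt h'
  · intro h' h''; linarith

-- shear (x, y) ↦ (x, y + π x) has determinant 1
theorem det_shear₁ {V W : Type*} [AddCommGroup V] [Module ℝ V] [AddCommGroup W] [Module ℝ W]
    [FiniteDimensional ℝ V] [FiniteDimensional ℝ W] (π : V →ₗ[ℝ] W) :
    LinearMap.det ((LinearMap.fst ℝ V W).prod (LinearMap.snd ℝ V W + π ∘ₗ LinearMap.fst ℝ V W))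
      = 1 := by
  set S := (LinearMap.fst ℝ V W).prod (LinearMap.snd ℝ V W + π ∘ₗ LinearMap.fst ℝ V W)
  let bv := finBasis ℝ V
  let bw := finBasis ℝ W
  rw [← LinearMap.det_toMatrix (bv.prod bw)]
  have hm : LinearMap.toMatrix (bv.prod bw) (bv.prod bw) S =
      Matrix.fromBlocks 1 0 (bw.toMatrix fun j => π (bv j)) 1 := by
    ext i j
    cases i with
    | inl i =>
      cases j with
      | inl j =>
        simp [LinearMap.toMatrix_apply, S, Basis.prod_apply, Basis.prod_repr_inl,
          Matrix.one_apply, Basis.repr_self_apply, Finsupp.single_apply, eq_comm]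
      | inr j =>
        simp [LinearMap.toMatrix_apply, S, Basis.prod_apply, Basis.prod_repr_inl]
    | inr i =>
      cases j with
      | inl j =>
        simp [LinearMap.toMatrix_apply, S, Basis.prod_apply, Basis.prod_repr_inr,
          Basis.toMatrix_apply]
      | inr j =>
        simp [LinearMap.toMatrix_apply, S, Basis.prod_apply, Basis.prod_repr_inr,
          Matrix.one_apply, Basis.repr_self_apply, Finsupp.single_apply, eq_comm]
  rw [hm, Matrix.det_fromBlocks_zero₁₂, Matrix.det_one, Matrix.det_one, mul_one]

-- shear (x, y) ↦ (x + π y, y) has determinant 1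
theorem det_shear₂ {V W : Type*} [AddCommGroup V] [Module ℝ V] [AddCommGroup W] [Module ℝ W]
    [FiniteDimensional ℝ V] [FiniteDimensional ℝ W] (π : W →ₗ[ℝ] V) :
    LinearMap.det ((LinearMap.fst ℝ V W + π ∘ₗ LinearMap.snd ℝ V W).prod (LinearMap.snd ℝ V W))
      = 1 := by
  set S := (LinearMap.fst ℝ V W + π ∘ₗ LinearMap.snd ℝ V W).prod (LinearMap.snd ℝ V W)
  let bv := finBasis ℝ V
  let bw := finBasis ℝ W
  rw [← LinearMap.det_toMatrix (bv.prod bw)]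
  have hm : LinearMap.toMatrix (bv.prod bw) (bv.prod bw) S =
      Matrix.fromBlocks 1 (bv.toMatrix fun j => π (bw j)) 0 1 := by
    ext i j
    cases i with
    | inl i =>
      cases j with
      | inl j =>
        simp [LinearMap.toMatrix_apply, S, Basis.prod_apply, Basis.prod_repr_inl,
          Matrix.one_apply, Basis.repr_self_apply, Finsupp.single_apply, eq_comm]
      | inr j =>
        simp [LinearMap.toMatrix_apply, S, Basis.prod_apply, Basis.prod_repr_inl,
          Basis.toMatrix_apply]
    | inr i =>
      cases j with
      | inl j =>
        simp [LinearMap.toMatrix_apply, S, Basis.prod_apply, Basis.prod_repr_inr]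
      | inr j =>
        simp [LinearMap.toMatrix_apply, S, Basis.prod_apply, Basis.prod_repr_inr,
          Matrix.one_apply, Basis.repr_self_apply, Finsupp.single_apply, eq_comm]
  rw [hm, Matrix.det_fromBlocks_zero₂₁, Matrix.det_one, Matrix.det_one, mul_one]

/-- cyclic block rotation of `Fin (m+n)`: `k < m ↦ n + k`, `k ≥ m ↦ k - m`. -/
def rotPerm (m n : ℕ) : Equiv.Perm (Fin (m + n)) :=
  finAddFlip.trans (finCongr (Nat.add_comm n m))

theorem rotPerm_castAdd {m n : ℕ} (i : Fin m) :
    rotPerm m n (Fin.castAdd n i) = ⟨n + i, by omega⟩ := by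
  simp [rotPerm, finAddFlip_apply_castAdd]
  ext; simp [Nat.add_comm]

theorem rotPerm_natAdd {m n : ℕ} (j : Fin n) :
    rotPerm m n (Fin.natAdd m j) = ⟨j, by omega⟩ := by
  simp [rotPerm, finAddFlip_apply_natAdd]
  ext; simp

theorem pow_finRotate_val {M : ℕ} (hM : 0 < M) (j : ℕ) (k : Fin M) :
    (((finRotate M) ^ j) k : ℕ) = ((k : ℕ) + j) % M := by
  obtain ⟨N, rfl⟩ : ∃ N, M = N + 1 := ⟨M - 1, by omega⟩
  induction j generalizing k with
  | zero => simp [Nat.mod_eq_of_lt k.isLt]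
  | succ j ih =>
    rw [pow_succ, Equiv.Perm.mul_apply, finRotate_succ_apply, ih (k + 1)]
    have h1 : ((k + 1 : Fin (N + 1)) : ℕ) = ((k : ℕ) + 1) % (N + 1) := by
      rw [Fin.add_def]; simp
    rw [h1, Nat.mod_add_mod]
    ring_nf

theorem rotPerm_eq_pow (m n : ℕ) : rotPerm m n = (finRotate (m + n)) ^ n := by
  rcases Nat.eq_zero_or_pos (m + n) with h | h
  · exact Equiv.ext fun k => absurd k.isLt (by omega)
  ext k
  rcases lt_or_ge (k : ℕ) m with hk | hk
  · have h1 : k = Fin.castAdd n ⟨k, hk⟩ := by ext; rfl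
    rw [h1, rotPerm_castAdd, pow_finRotate_val h]
    simp only [Fin.coe_castAdd]
    rw [Nat.mod_eq_of_lt (by omega)]
    omega
  · have h1 : k = Fin.natAdd m ⟨(k : ℕ) - m, by omega⟩ := by ext; simp; omega
    rw [h1, rotPerm_natAdd, pow_finRotate_val h]
    simp only [Fin.coe_natAdd]
    rw [show m + ((k:ℕ) - m) + n = ((k:ℕ) - m) + (m + n) by omega, Nat.add_mod_right,
      Nat.mod_eq_of_lt (by omega)]

theorem sign_rotPerm (m n : ℕ) : Equiv.Perm.sign (rotPerm m n) = (-1) ^ (m * n) := by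
  rcases Nat.eq_zero_or_pos (m + n) with h | h
  · have h1 : rotPerm m n = 1 := Equiv.ext fun k => absurd k.isLt (by omega)
    have hm : m = 0 := by omega
    subst hm
    simp [h1]
  obtain ⟨N, hN⟩ : ∃ N, m + n = N + 1 := ⟨m + n - 1, by omega⟩
  rw [rotPerm_eq_pow, map_pow, hN, sign_finRotate, ← pow_mul]
  have hmod : n * n % 2 = n % 2 := by
    rcases Nat.even_or_odd n with ⟨k, hk⟩ | ⟨k, hk⟩ <;> subst hk <;> ring_nf <;> omega
  have key : N * n + n = m * n + n * n := by
    calc N * n + n = (N + 1) * n := by ring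
    _ = (m + n) * n := by rw [hN]
    _ = m * n + n * n := by ring
  have hpar : N * n % 2 = m * n % 2 := by omega
  rcases Nat.even_or_odd (m * n) with he | ho
  · have h1 : Even (N * n) := by rw [Nat.even_iff] at he ⊢; omega
    rw [he.neg_one_pow, Nat.add_sub_cancel, h1.neg_one_pow]
  · have h1 : Odd (N * n) := by rw [Nat.odd_iff] at ho ⊢; omega
    rw [ho.neg_one_pow, Nat.add_sub_cancel, h1.neg_one_pow]

theorem det_chain {M : Type*} [AddCommGroup M] [Module ℝ M] {n : ℕ}
    (p q : Basis (Fin n) ℝ M) (v : Fin n → M) :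
    p.det v = p.det q * q.det v := by
  conv_lhs => rw [p.det.eq_smul_basis_det q]
  simp [smul_eq_mul]

theorem det_one_chain {M : Type*} [AddCommGroup M] [Module ℝ M] {n : ℕ}
    (p q : Basis (Fin n) ℝ M) : p.det q * q.det p = 1 := by
  have h := (det_chain p q (⇑p)).symm
  rwa [Basis.det_self] at h

theorem det_neg_family {M : Type*} [AddCommGroup M] [Module ℝ M] {n : ℕ}
    (b : Basis (Fin n) ℝ M) (v : Fin n → M) :
    b.det (fun i => -(v i)) = (-1 : ℝ) ^ n * b.det v := by
  have h := b.det.toMultilinearMap.map_smul_univ (fun _ : Fin n => (-1 : ℝ)) v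
  simp only [neg_one_smul, Finset.prod_const, Finset.card_univ, Fintype.card_fin,
    smul_eq_mul] at h
  exact h

theorem units_neg_one_pow_smul (k : ℕ) (x : ℝ) :
    ((-1 : ℤˣ) ^ k) • x = (-1 : ℝ) ^ k * x := by
  rcases Nat.even_or_odd k with h | h
  · rw [h.neg_one_pow, h.neg_one_pow, one_smul, one_mul]
  · rw [h.neg_one_pow, h.neg_one_pow, Units.smul_def]
    norm_num

theorem basis_subsingleton_card_zero {P : Type*} [AddCommGroup P] [Module ℝ P]
    [Subsingleton P] {nc : ℕ} (c : Basis (Fin nc) ℝ P) : nc = 0 := by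
  by_contra h
  exact c.ne_zero ⟨0, Nat.pos_of_ne_zero h⟩ (Subsingleton.elim _ _)

theorem nat_mul_pred_even (n : ℕ) : n * (n - 1) % 2 = 0 := by
  rw [Nat.mul_mod]
  rcases Nat.even_or_odd n with ⟨k, hk⟩ | ⟨k, hk⟩
  · have h : n % 2 = 0 := by omega
    rw [h]; simp
  · have h : (n - 1) % 2 = 0 := by omega
    rw [h]; simp

theorem nat_mul_self_eq (n : ℕ) : n * n = n * (n - 1) + n := by
  cases n with
  | zero => simp
  | succ m => simp [Nat.succ_sub_one]; ring

theorem nat_mul_succ_eq (n : ℕ) : n * (n + 1) = n * (n - 1) + 2 * n := by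
  cases n with
  | zero => simp
  | succ m => simp [Nat.succ_sub_one]; ring

theorem parity_left (n c : ℕ) :
    (n * n + n * c + n * c + n * (n - 1) / 2) % 2 = (n * (n + 1) / 2) % 2 := by
  have h2 := nat_mul_pred_even n
  have hA := nat_mul_self_eq n
  have hB := nat_mul_succ_eq n
  omega

theorem parity_right (m n : ℕ) :
    (m * n + m * 0 + n * 0 + n * (n - 1) / 2) % 2 = ((m * n + n) + n * (n + 1) / 2) % 2 := by
  have h2 := nat_mul_pred_even n
  have hB := nat_mul_succ_eq n
  omega


end Toolkit
set_option maxHeartbeats 1600000 in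

/-- **Unit property of the composition of orientations.**  The identity orientation datum
is independent of the choice made in its definition; moreover it is a left and a right unit
for the composition of orientations: with `f(x) = (x, −π x)` (resp. `f'(x) = (π' x, −x)`)
one has `ker f = 0`, the map `(a, b) ↦ b + π a` (resp. `(b, a) ↦ b + π' a`) induces an
isomorphism `coker f ≅ B₂` (resp. `coker f' ≅ B₁`), and under these identifications
`μ₂ ∘_f μ^id = μ₂` (resp. `μ^id ∘_{f'} μ₁ = μ₁`). -/
theorem composite_orientation_units
    {A₀ : Type*} [AddCommGroup A₀] [Module ℝ A₀] [FiniteDimensional ℝ A₀]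
    {A₂ B₂ C₂ : Type*}
    [AddCommGroup A₂] [Module ℝ A₂] [AddCommGroup B₂] [Module ℝ B₂]
    [AddCommGroup C₂] [Module ℝ C₂]
    [FiniteDimensional ℝ A₂] [FiniteDimensional ℝ B₂] [FiniteDimensional ℝ C₂]
    {A₁ B₁ C₁ A' : Type*}
    [AddCommGroup A₁] [Module ℝ A₁] [AddCommGroup B₁] [Module ℝ B₁]
    [AddCommGroup C₁] [Module ℝ C₁] [AddCommGroup A'] [Module ℝ A']
    [FiniteDimensional ℝ A₁] [FiniteDimensional ℝ B₁] [FiniteDimensional ℝ C₁]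
    [FiniteDimensional ℝ A']
    {n₀ nc₀ nid ncid na₂ nb₂ nc₂ nk ncok nid' ncid' na₁ nb₁ nc₁ nk' ncok' : ℕ}
    -- left unit data
    (π : A₂ →ₗ[ℝ] B₂)
    (f : A₂ →ₗ[ℝ] A₂ × B₂) (hfdef : ∀ x : A₂, f x = (x, -π x))
    (μid : Orientation ℝ (A₂ × (A₂ × PUnit)) (Fin (nid + (nid + ncid))))
    (hμid : IsIdOrientation μid)
    (μ₂ : Orientation ℝ (B₂ × (A₂ × C₂)) (Fin (nb₂ + (na₂ + nc₂))))
    (ν : Orientation ℝ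
      (((A₂ × B₂) ⧸ LinearMap.range f) × (A₂ × (PUnit × (C₂ × ↥(LinearMap.ker f)))))
      (Fin (ncok + (nid + (ncid + (nc₂ + nk))))))
    (hν : IsCompositeOrientation f μid μ₂ ν)
    (g : A₂ × B₂ →ₗ[ℝ] B₂) (hgdef : ∀ p : A₂ × B₂, g p = p.2 + π p.1)
    -- right unit data
    (π' : A' →ₗ[ℝ] B₁)
    (f' : A' →ₗ[ℝ] B₁ × A') (hf'def : ∀ x : A', f' x = (π' x, -x))
    (μid' : Orientation ℝ (A' × (A' × PUnit)) (Fin (nid' + (nid' + ncid'))))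
    (hμid' : IsIdOrientation μid')
    (μ₁ : Orientation ℝ (B₁ × (A₁ × C₁)) (Fin (nb₁ + (na₁ + nc₁))))
    (ν' : Orientation ℝ
      (((B₁ × A') ⧸ LinearMap.range f') × (A₁ × (C₁ × (PUnit × ↥(LinearMap.ker f')))))
      (Fin (ncok' + (na₁ + (nc₁ + (ncid' + nk'))))))
    (hν' : IsCompositeOrientation f' μ₁ μid' ν')
    (g' : B₁ × A' →ₗ[ℝ] B₁) (hg'def : ∀ p : B₁ × A', g' p = p.1 + π' p.2) :
    -- the identity orientation is independent of the choice in its definition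
    (∀ μ μ' : Orientation ℝ (A₀ × (A₀ × PUnit)) (Fin (n₀ + (n₀ + nc₀))),
      IsIdOrientation μ → IsIdOrientation μ' → μ = μ') ∧
    -- left unit
    LinearMap.ker f = ⊥ ∧
    LinearMap.ker g = LinearMap.range f ∧ Function.Surjective g ∧
    (∀ T : ((((A₂ × B₂) ⧸ LinearMap.range f) ×
          (A₂ × (PUnit × (C₂ × ↥(LinearMap.ker f))))) ≃ₗ[ℝ] B₂ × (A₂ × C₂)),
      (∀ (x : A₂ × B₂) (a : A₂) (u : PUnit) (c : C₂) (k : ↥(LinearMap.ker f)),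
        T (Submodule.mkQ (LinearMap.range f) x, (a, (u, (c, k)))) = (g x, (a, c))) →
      ∀ hN : ncok + (nid + (ncid + (nc₂ + nk))) = nb₂ + (na₂ + nc₂),
        Orientation.reindex ℝ _ (finCongr hN)
          (Orientation.map (Fin (ncok + (nid + (ncid + (nc₂ + nk))))) T ν) = μ₂) ∧
    -- right unit
    LinearMap.ker f' = ⊥ ∧
    LinearMap.ker g' = LinearMap.range f' ∧ Function.Surjective g' ∧
    (∀ T' : ((((B₁ × A') ⧸ LinearMap.range f') ×
          (A₁ × (C₁ × (PUnit × ↥(LinearMap.ker f'))))) ≃ₗ[ℝ] B₁ × (A₁ × C₁)),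
      (∀ (x : B₁ × A') (a : A₁) (c : C₁) (u : PUnit) (k : ↥(LinearMap.ker f')),
        T' (Submodule.mkQ (LinearMap.range f') x, (a, (c, (u, k)))) = (g' x, (a, c))) →
      ∀ hN' : ncok' + (na₁ + (nc₁ + (ncid' + nk'))) = nb₁ + (na₁ + nc₁),
        Orientation.reindex ℝ _ (finCongr hN')
          (Orientation.map (Fin (ncok' + (na₁ + (nc₁ + (ncid' + nk'))))) T' ν') = μ₁) := by
  -- ===== easy kernel facts =====
  have hkerf : LinearMap.ker f = ⊥ := LinearMap.ker_eq_bot'.mpr fun x hx => by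
    have h : (x, -π x) = (0 : A₂ × B₂) := by rw [← hfdef]; exact hx
    exact congrArg Prod.fst h
  have hkerf' : LinearMap.ker f' = ⊥ := LinearMap.ker_eq_bot'.mpr fun x hx => by
    have h : (π' x, -x) = (0 : B₁ × A') := by rw [← hf'def]; exact hx
    have h2 := congrArg Prod.snd h
    simpa using congrArg Neg.neg h2
  have hkg : LinearMap.ker g = LinearMap.range f := by
    ext p
    obtain ⟨a, b⟩ := p
    simp only [LinearMap.mem_ker, LinearMap.mem_range, hgdef]
    constructor
    · intro h
      refine ⟨a, ?_⟩
      rw [hfdef]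
      have : -π a = b := by
        have := eq_neg_of_add_eq_zero_left h
        rw [this]
      rw [this]
    · rintro ⟨x, hx⟩
      rw [hfdef] at hx
      have h1 : x = a := congrArg Prod.fst hx
      have h2 : -π x = b := congrArg Prod.snd hx
      subst h1
      rw [← h2]
      simp
  have hgsurj : Function.Surjective g := fun b => ⟨(0, b), by rw [hgdef]; simp⟩
  have hkg' : LinearMap.ker g' = LinearMap.range f' := by
    ext p
    obtain ⟨b, a⟩ := p
    simp only [LinearMap.mem_ker, LinearMap.mem_range, hg'def]
    constructor
    · intro h
      refine ⟨-a, ?_⟩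
      rw [hf'def]
      have : π' (-a) = b := by
        rw [map_neg]
        have := eq_neg_of_add_eq_zero_left h
        rw [← this]
      rw [this]
      simp
    · rintro ⟨x, hx⟩
      rw [hf'def] at hx
      have h1 : π' x = b := congrArg Prod.fst hx
      have h2 : -x = a := congrArg Prod.snd hx
      rw [← h1, ← h2]
      simp
  have hg'surj : Function.Surjective g' := fun b => ⟨(b, 0), by rw [hg'def]; simp⟩
  -- ===== uniqueness of the identity orientation =====
  have huniq : ∀ μ μ' : Orientation ℝ (A₀ × (A₀ × PUnit)) (Fin (n₀ + (n₀ + nc₀))),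
      IsIdOrientation μ → IsIdOrientation μ' → μ = μ' := by
    intro μ μ' hμ hμ'
    obtain ⟨b, c, hb⟩ := hμ
    obtain ⟨b', c', hb'⟩ := hμ'
    have h0 : nc₀ = 0 := basis_subsingleton_card_zero c
    subst h0
    have hpos : (prodBasis b (prodBasis b c)).orientation
        = (prodBasis b' (prodBasis b' c')).orientation := by
      rw [Basis.orientation_eq_iff_det_pos,
        prodBasis_det_block₁ _ _ _ (fun i => by rw [prodBasis_castAdd])]
      have e1 : (fun i => ((prodBasis b' (prodBasis b' c')) (Fin.castAdd (n₀ + 0) i)).1) = ⇑b' :=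
        funext fun i => by rw [prodBasis_castAdd]
      have e2 : (fun j => ((prodBasis b' (prodBasis b' c')) (Fin.natAdd n₀ j)).2)
          = ⇑(prodBasis b' c') := funext fun j => by rw [prodBasis_natAdd]
      rw [e1, e2, prodBasis_det_block₁ _ _ _ (fun i => by rw [prodBasis_castAdd])]
      have e3 : (fun i => ((prodBasis b' c') (Fin.castAdd 0 i)).1) = ⇑b' :=
        funext fun i => by rw [prodBasis_castAdd]
      rw [e3]
      rw [det_empty]
      have hx : b.det ⇑b' ≠ 0 := (b.isUnit_det b').ne_zero
      nlinarith [mul_self_pos.mpr hx]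
    rw [hb, hb']
    by_cases hc : (n₀ * (n₀ + 1) / 2) % 2 = 0
    · rw [if_pos hc, if_pos hc, hpos]
    · rw [if_neg hc, if_neg hc, hpos]
  refine ⟨huniq, hkerf, hkg, hgsurj, ?_, hkerf', hkg', hg'surj, ?_⟩
  -- ===================== LEFT UNIT =====================
  · haveI hsubK : Subsingleton ↥(LinearMap.ker f) := by rw [hkerf]; infer_instance
    obtain ⟨a1, b1, c1, a2, b2, c2, dl, e, z, F, G, hFi, hGi,
      hF1, hF2, hG1, hG2, h5, h6, h7, h8, h9⟩ := hν
    obtain ⟨bb, cc, hbb⟩ := hμid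
    have hnk : nk = 0 := basis_subsingleton_card_zero z
    have hncid : ncid = 0 := basis_subsingleton_card_zero c1
    subst hnk
    subst hncid
    have hd : finrank ℝ ↥(LinearMap.range f) = na₂ := by omega
    have hnid : na₂ = nid := by
      have h1 := Module.finrank_eq_card_basis a1
      have h2 := Module.finrank_eq_card_basis a2
      rw [Fintype.card_fin] at h1 h2
      omega
    subst hnid
    have hncok : nb₂ = ncok := by omega
    subst hncok
    intro T hT hN
    -- the two distinguished families
    set U : Fin na₂ → A₂ := fun i => G (0, dl ⟨(i : ℕ), by omega⟩) with hU
    set w : Fin nb₂ → B₂ := fun j => g (F (0, e j)) with hw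
    -- fact from h8 : 0 < a2.det U
    have hDG : 0 < a2.det U := by
      rw [← Basis.orientation_reindex, eq_comm, Basis.orientation_eq_iff_det_pos] at h8
      have hfam : ⇑(((prodBasis z dl).map G).reindex (finCongr hGi)) = U := by
        funext k
        simp only [Basis.coe_reindex, Basis.map_apply, Function.comp_apply,
          finCongr_symm, finCongr_apply]
        rw [prodBasis_of_ge _ _ _ (by simp)]
        rfl
      rwa [hfam] at h8
    -- fact from h7 + shear : 0 < b1.det U * b2.det w
    set vF : Fin (na₂ + nb₂) → A₂ × B₂ :=
      ⇑(((prodBasis dl e).map F).reindex (finCongr hFi)) with hvF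
    have h7' : 0 < (prodBasis b1 b2).det vF := by
      rw [← Basis.orientation_reindex, eq_comm, Basis.orientation_eq_iff_det_pos] at h7
      exact h7
    set S : A₂ × B₂ →ₗ[ℝ] A₂ × B₂ :=
      (LinearMap.fst ℝ A₂ B₂).prod (LinearMap.snd ℝ A₂ B₂ + π ∘ₗ LinearMap.fst ℝ A₂ B₂)
      with hSdef
    have hSapp : ∀ p : A₂ × B₂, S p = (p.1, p.2 + π p.1) := fun p => rfl
    have hcomp : (prodBasis b1 b2).det (⇑S ∘ vF) = (prodBasis b1 b2).det vF := by
      rw [Basis.det_comp, det_shear₁, one_mul]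
    have hvF1 : ∀ i : Fin na₂, (⇑S ∘ vF) (Fin.castAdd nb₂ i) = (U i, 0) := by
      intro i
      have h1 : vF (Fin.castAdd nb₂ i) = ((dl ⟨(i : ℕ), by omega⟩ : ↥(LinearMap.range f))
          : A₂ × B₂) := by
        rw [hvF]
        simp only [Basis.coe_reindex, Basis.map_apply, Function.comp_apply,
          finCongr_symm, finCongr_apply]
        rw [prodBasis_of_lt _ _ _ (by simp; omega)]
        rw [hF1]
        rfl
      have h2 : ((dl ⟨(i : ℕ), by omega⟩ : ↥(LinearMap.range f)) : A₂ × B₂) = f (U i) :=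
        (hG2 _).symm
      rw [Function.comp_apply, h1, h2, hfdef, hSapp]
      simp
    have hvF2 : ∀ j : Fin nb₂, ((⇑S ∘ vF) (Fin.natAdd na₂ j)).2 = w j := by
      intro j
      have h1 : vF (Fin.natAdd na₂ j) = F (0, e j) := by
        rw [hvF]
        simp only [Basis.coe_reindex, Basis.map_apply, Function.comp_apply,
          finCongr_symm, finCongr_apply]
        rw [prodBasis_of_ge _ _ _ (by simp)]
        exact congrArg F (congrArg (Prod.mk 0) (congrArg e (Fin.ext (by simp))))
      rw [Function.comp_apply, h1, hSapp, hw]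
      simp only []
      rw [hgdef]
    have hI : 0 < b1.det U * b2.det w := by
      have hb := prodBasis_det_block₁ b1 b2 (⇑S ∘ vF) (fun i => by rw [hvF1 i])
      rw [hcomp] at hb
      have e1 : (fun i => ((⇑S ∘ vF) (Fin.castAdd nb₂ i)).1) = U :=
        funext fun i => by rw [hvF1 i]
      have e2 : (fun j => ((⇑S ∘ vF) (Fin.natAdd na₂ j)).2) = w :=
        funext fun j => by rw [hvF2 j]
      rw [e1, e2] at hb
      rw [← hb]
      exact h7'
    -- determinant from h5 / hbb
    have hBeq : (prodBasis b1 (prodBasis a1 c1)).orientation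
        = (if (na₂ * (na₂ + 1) / 2) % 2 = 0
            then (prodBasis bb (prodBasis bb cc)).orientation
            else -(prodBasis bb (prodBasis bb cc)).orientation) := by
      rw [← h5, hbb]
    have hdet_eq : (prodBasis b1 (prodBasis a1 c1)).det ⇑(prodBasis bb (prodBasis bb cc))
        = b1.det ⇑bb * (a1.det ⇑bb * 1) := by
      rw [prodBasis_det_block₁ _ _ _ (fun i => by rw [prodBasis_castAdd])]
      have e1 : (fun i => ((prodBasis bb (prodBasis bb cc)) (Fin.castAdd (na₂ + 0) i)).1) = ⇑bb :=
        funext fun i => by rw [prodBasis_castAdd]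
      have e2 : (fun j => ((prodBasis bb (prodBasis bb cc)) (Fin.natAdd na₂ j)).2)
          = ⇑(prodBasis bb cc) := funext fun j => by rw [prodBasis_natAdd]
      rw [e1, e2, prodBasis_det_block₁ _ _ _ (fun i => by rw [prodBasis_castAdd])]
      have e3 : (fun i => ((prodBasis bb cc) (Fin.castAdd 0 i)).1) = ⇑bb :=
        funext fun i => by rw [prodBasis_castAdd]
      rw [e3, det_empty]
    -- evaluate the image basis
    set vT : Fin (nb₂ + (na₂ + nc₂)) → B₂ × (A₂ × C₂) :=
      ⇑(((prodBasis e (prodBasis a1 (prodBasis c1 (prodBasis c2 z)))).map T).reindex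
        (finCongr hN)) with hvT
    have hv1 : ∀ j : Fin nb₂, vT (Fin.castAdd (na₂ + nc₂) j) = (w j, 0) := by
      intro j
      rw [hvT]
      simp only [Basis.coe_reindex, Basis.map_apply, Function.comp_apply,
        finCongr_symm, finCongr_apply]
      rw [prodBasis_of_lt _ _ _ (by simp)]
      have hj : (⟨((Fin.cast hN.symm (Fin.castAdd (na₂ + nc₂) j)) : ℕ), by simp⟩ : Fin nb₂)
          = j := by ext; simp
      rw [hj, hw]
      conv_lhs => rw [← hF2 (e j)]
      exact hT (F (0, e j)) 0 0 0 0
    have hv2 : ∀ i : Fin na₂, vT (Fin.natAdd nb₂ (Fin.castAdd nc₂ i)) = (0, (a1 i, 0)) := by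
      intro i
      rw [hvT]
      simp only [Basis.coe_reindex, Basis.map_apply, Function.comp_apply,
        finCongr_symm, finCongr_apply]
      rw [prodBasis_of_ge _ _ _ (by simp), prodBasis_of_lt _ _ _ (by simp)]
      have hj : (⟨((Fin.cast hN.symm (Fin.natAdd nb₂ (Fin.castAdd nc₂ i))) : ℕ) - nb₂,
          by simp⟩ : Fin na₂) = i := by ext; simp
      rw [hj]
      have h := hT 0 (a1 i) 0 0 0
      rw [map_zero, map_zero] at h
      exact h
    have hv3 : ∀ k : Fin nc₂, vT (Fin.natAdd nb₂ (Fin.natAdd na₂ k)) = (0, (0, c2 k)) := by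
      intro k
      rw [hvT]
      simp only [Basis.coe_reindex, Basis.map_apply, Function.comp_apply,
        finCongr_symm, finCongr_apply]
      rw [prodBasis_of_ge _ _ _ (by simp), prodBasis_of_ge _ _ _ (by simp),
        prodBasis_of_ge _ _ _ (by simp), prodBasis_of_lt _ _ _ (by simp)]
      have hj : (⟨((Fin.cast hN.symm (Fin.natAdd nb₂ (Fin.natAdd na₂ k)) : ℕ) - nb₂ - na₂ - 0),
          by simp⟩ : Fin nc₂) = k := by ext; simp
      rw [hj]
      have h := hT 0 0 0 (c2 k) 0
      rw [map_zero, map_zero] at h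
      exact h
    have hDgoal : (prodBasis b2 (prodBasis a2 c2)).det vT
        = b2.det w * (a2.det ⇑a1 * 1) := by
      rw [prodBasis_det_block₁ _ _ _ (fun j => by rw [hv1 j])]
      have e1 : (fun j => (vT (Fin.castAdd (na₂ + nc₂) j)).1) = w :=
        funext fun j => by rw [hv1 j]
      rw [e1]
      congr 1
      rw [prodBasis_det_block₁ _ _ _ (fun i => by rw [hv2 i])]
      have e2 : (fun i => ((fun j => (vT (Fin.natAdd nb₂ j)).2) (Fin.castAdd nc₂ i)).1) = ⇑a1 :=
        funext fun i => by simp only []; rw [hv2 i]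
      have e3 : (fun k => ((fun j => (vT (Fin.natAdd nb₂ j)).2) (Fin.natAdd na₂ k)).2) = ⇑c2 :=
        funext fun k => by simp only []; rw [hv3 k]
      rw [e2, e3, Basis.det_self]
    -- chain relations and the key algebraic identity
    have c1h : b1.det U = b1.det ⇑a2 * a2.det U := det_chain b1 a2 U
    have c2h : b1.det ⇑a2 = b1.det ⇑bb * bb.det ⇑a2 := det_chain b1 bb ⇑a2
    have c3h : a2.det ⇑a1 = a2.det ⇑bb * bb.det ⇑a1 := det_chain a2 bb ⇑a1
    have c4h : bb.det ⇑a1 * a1.det ⇑bb = 1 := det_one_chain bb a1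
    have c5h : bb.det ⇑a2 * a2.det ⇑bb = 1 := det_one_chain bb a2
    have hQ : a2.det ⇑bb ≠ 0 := (a2.isUnit_det bb).ne_zero
    have hQ2 : 0 < (a2.det ⇑bb) ^ 2 :=
      lt_of_le_of_ne (sq_nonneg _) (Ne.symm (pow_ne_zero 2 hQ))
    have hkey : (b2.det w * (a2.det ⇑a1 * 1)) * ((b1.det ⇑bb * (a1.det ⇑bb * 1)) * a2.det U)
        = (b1.det U * b2.det w) * (a2.det ⇑bb) ^ 2 := by
      linear_combination (b2.det w * b1.det ⇑bb * a1.det ⇑bb * a2.det U) * c3h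
        + (b2.det w * a2.det ⇑bb * b1.det ⇑bb * a2.det U) * c4h
        + (-(b2.det w * (a2.det ⇑bb) ^ 2)) * c1h
        + (-(b2.det w * (a2.det ⇑bb) ^ 2 * a2.det U)) * c2h
        + (-(b1.det ⇑bb * a2.det U * b2.det w * a2.det ⇑bb)) * c5h
    rw [hd] at h9
    rw [h6, h9]
    by_cases hC : (na₂ * (na₂ + 1) / 2) % 2 = 0
    · rw [if_pos hC] at hBeq
      rw [Basis.orientation_eq_iff_det_pos, hdet_eq] at hBeq
      rw [if_pos (by rw [parity_left na₂ nc₂]; exact hC)]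
      rw [← Basis.orientation_map, ← Basis.orientation_reindex, eq_comm,
        Basis.orientation_eq_iff_det_pos]
      rw [show ⇑(((prodBasis e (prodBasis a1 (prodBasis c1 (prodBasis c2 z)))).map T).reindex
        (finCongr hN)) = vT from hvT.symm, hDgoal]
      nlinarith [mul_pos hI hQ2, mul_pos hBeq hDG, hkey]
    · rw [if_neg hC] at hBeq
      rw [orientation_eq_neg_iff_det_neg, hdet_eq] at hBeq
      rw [if_neg (by rw [parity_left na₂ nc₂]; exact hC)]
      rw [Orientation.map_neg, Orientation.reindex_neg]
      rw [← Basis.orientation_map, ← Basis.orientation_reindex, eq_comm,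
        orientation_eq_neg_iff_det_neg]
      rw [show ⇑(((prodBasis e (prodBasis a1 (prodBasis c1 (prodBasis c2 z)))).map T).reindex
        (finCongr hN)) = vT from hvT.symm, hDgoal]
      nlinarith [mul_pos hI hQ2, mul_neg_of_neg_of_pos hBeq hDG, hkey]
  -- ===================== RIGHT UNIT =====================
  · haveI hsubK : Subsingleton ↥(LinearMap.ker f') := by rw [hkerf']; infer_instance
    obtain ⟨a1, b1, c1, a2, b2, c2, dl, e, z, F, G, hFi, hGi,
      hF1, hF2, hG1, hG2, h5, h6, h7, h8, h9⟩ := hν'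
    obtain ⟨bb, cc, hbb⟩ := hμid'
    have hnk : nk' = 0 := basis_subsingleton_card_zero z
    have hncid : ncid' = 0 := basis_subsingleton_card_zero c2
    subst hnk
    subst hncid
    have hd : finrank ℝ ↥(LinearMap.range f') = nid' := by omega
    have hncok : nb₁ = ncok' := by omega
    subst hncok
    intro T hT hN
    set U : Fin nid' → A' := fun i => G (0, dl ⟨(i : ℕ), by omega⟩) with hU
    set w : Fin nb₁ → B₁ := fun j => g' (F (0, e j)) with hw
    have hDG : 0 < a2.det U := by
      rw [← Basis.orientation_reindex, eq_comm, Basis.orientation_eq_iff_det_pos] at h8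
      have hfam : ⇑(((prodBasis z dl).map G).reindex (finCongr hGi)) = U := by
        funext k
        simp only [Basis.coe_reindex, Basis.map_apply, Function.comp_apply,
          finCongr_symm, finCongr_apply]
        rw [prodBasis_of_ge _ _ _ (by simp)]
        rfl
      rwa [hfam] at h8
    set vF : Fin (nb₁ + nid') → B₁ × A' :=
      ⇑(((prodBasis dl e).map F).reindex (finCongr hFi)) with hvF
    have h7' : 0 < (prodBasis b1 b2).det vF := by
      rw [← Basis.orientation_reindex, eq_comm, Basis.orientation_eq_iff_det_pos] at h7
      exact h7
    set S : B₁ × A' →ₗ[ℝ] B₁ × A' :=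
      (LinearMap.fst ℝ B₁ A' + π' ∘ₗ LinearMap.snd ℝ B₁ A').prod (LinearMap.snd ℝ B₁ A')
      with hSdef
    have hSapp : ∀ p : B₁ × A', S p = (p.1 + π' p.2, p.2) := fun p => rfl
    have hcomp : (prodBasis b1 b2).det (⇑S ∘ vF) = (prodBasis b1 b2).det vF := by
      rw [Basis.det_comp, det_shear₂, one_mul]
    have hρ2 : ∀ i : Fin nid',
        ((⇑S ∘ vF) ∘ (rotPerm nb₁ nid')) (Fin.natAdd nb₁ i) = (0, -(U i)) := by
      intro i
      have h1 : vF (rotPerm nb₁ nid' (Fin.natAdd nb₁ i))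
          = ((dl ⟨(i : ℕ), by omega⟩ : ↥(LinearMap.range f')) : B₁ × A') := by
        rw [rotPerm_natAdd, hvF]
        simp only [Basis.coe_reindex, Basis.map_apply, Function.comp_apply,
          finCongr_symm, finCongr_apply]
        rw [prodBasis_of_lt _ _ _ (by simp; omega)]
        rw [hF1]
        rfl
      have h2 : ((dl ⟨(i : ℕ), by omega⟩ : ↥(LinearMap.range f')) : B₁ × A') = f' (U i) :=
        (hG2 _).symm
      rw [Function.comp_apply, Function.comp_apply, h1, h2, hf'def, hSapp]
      simp
    have hρ1 : ∀ j : Fin nb₁,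
        (((⇑S ∘ vF) ∘ (rotPerm nb₁ nid')) (Fin.castAdd nid' j)).1 = w j := by
      intro j
      have h1 : vF (rotPerm nb₁ nid' (Fin.castAdd nid' j)) = F (0, e j) := by
        rw [rotPerm_castAdd, hvF]
        simp only [Basis.coe_reindex, Basis.map_apply, Function.comp_apply,
          finCongr_symm, finCongr_apply]
        rw [prodBasis_of_ge _ _ _ (by simp; omega)]
        exact congrArg F (congrArg (Prod.mk 0) (congrArg e (Fin.ext (by simp; omega))))
      rw [Function.comp_apply, Function.comp_apply, h1, hSapp, hw]
      simp only []
      rw [hg'def]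
    have hblk : (prodBasis b1 b2).det ((⇑S ∘ vF) ∘ (rotPerm nb₁ nid'))
        = b1.det w * b2.det (fun i => -(U i)) := by
      rw [prodBasis_det_block₂ _ _ _ (fun i => by rw [hρ2 i])]
      have e1 : (fun j => (((⇑S ∘ vF) ∘ (rotPerm nb₁ nid')) (Fin.castAdd nid' j)).1) = w :=
        funext fun j => hρ1 j
      have e2 : (fun i => (((⇑S ∘ vF) ∘ (rotPerm nb₁ nid')) (Fin.natAdd nb₁ i)).2)
          = (fun i => -(U i)) := funext fun i => by rw [hρ2 i]
      rw [e1, e2]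
    have hperm : (prodBasis b1 b2).det ((⇑S ∘ vF) ∘ (rotPerm nb₁ nid'))
        = (-1 : ℝ) ^ (nb₁ * nid') * (prodBasis b1 b2).det vF := by
      rw [((prodBasis b1 b2).det).map_perm (⇑S ∘ vF) (rotPerm nb₁ nid'), sign_rotPerm,
        units_neg_one_pow_smul, hcomp]
    have EQ : (-1 : ℝ) ^ (nb₁ * nid') * (prodBasis b1 b2).det vF
        = b1.det w * ((-1 : ℝ) ^ nid' * (b2.det ⇑a2 * a2.det U)) := by
      rw [← hperm, hblk, det_neg_family, det_chain b2 a2 U]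
    have EQ2 : (prodBasis b1 b2).det vF
        = (-1 : ℝ) ^ (nb₁ * nid' + nid') * (b1.det w * (b2.det ⇑a2 * a2.det U)) := by
      have hsq : (-1 : ℝ) ^ (nb₁ * nid') * (-1 : ℝ) ^ (nb₁ * nid') = 1 := by
        rw [← pow_add]
        exact Even.neg_one_pow ⟨nb₁ * nid', rfl⟩
      calc (prodBasis b1 b2).det vF
          = ((-1 : ℝ) ^ (nb₁ * nid') * (-1 : ℝ) ^ (nb₁ * nid')) * (prodBasis b1 b2).det vF := by
            rw [hsq, one_mul]
        _ = (-1 : ℝ) ^ (nb₁ * nid') * ((-1 : ℝ) ^ (nb₁ * nid') * (prodBasis b1 b2).det vF) := by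
            ring
        _ = (-1 : ℝ) ^ (nb₁ * nid') * (b1.det w * ((-1 : ℝ) ^ nid' * (b2.det ⇑a2 * a2.det U)))
            := by rw [EQ]
        _ = (-1 : ℝ) ^ (nb₁ * nid' + nid') * (b1.det w * (b2.det ⇑a2 * a2.det U)) := by
            rw [pow_add]; ring
    -- determinant from h6 / hbb
    have hBeq : (prodBasis b2 (prodBasis a2 c2)).orientation
        = (if (nid' * (nid' + 1) / 2) % 2 = 0
            then (prodBasis bb (prodBasis bb cc)).orientation
            else -(prodBasis bb (prodBasis bb cc)).orientation) := by
      rw [← h6, hbb]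
    have hdet_eq : (prodBasis b2 (prodBasis a2 c2)).det ⇑(prodBasis bb (prodBasis bb cc))
        = b2.det ⇑bb * (a2.det ⇑bb * 1) := by
      rw [prodBasis_det_block₁ _ _ _ (fun i => by rw [prodBasis_castAdd])]
      have e1 : (fun i => ((prodBasis bb (prodBasis bb cc)) (Fin.castAdd (nid' + 0) i)).1) = ⇑bb :=
        funext fun i => by rw [prodBasis_castAdd]
      have e2 : (fun j => ((prodBasis bb (prodBasis bb cc)) (Fin.natAdd nid' j)).2)
          = ⇑(prodBasis bb cc) := funext fun j => by rw [prodBasis_natAdd]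
      rw [e1, e2, prodBasis_det_block₁ _ _ _ (fun i => by rw [prodBasis_castAdd])]
      have e3 : (fun i => ((prodBasis bb cc) (Fin.castAdd 0 i)).1) = ⇑bb :=
        funext fun i => by rw [prodBasis_castAdd]
      rw [e3, det_empty]
    -- the image basis under T'
    set vT : Fin (nb₁ + (na₁ + nc₁)) → B₁ × (A₁ × C₁) :=
      ⇑(((prodBasis e (prodBasis a1 (prodBasis c1 (prodBasis c2 z)))).map T).reindex
        (finCongr hN)) with hvT
    have hv1 : ∀ j : Fin nb₁, vT (Fin.castAdd (na₁ + nc₁) j) = (w j, 0) := by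
      intro j
      rw [hvT]
      simp only [Basis.coe_reindex, Basis.map_apply, Function.comp_apply,
        finCongr_symm, finCongr_apply]
      rw [prodBasis_of_lt _ _ _ (by simp)]
      have hj : (⟨((Fin.cast hN.symm (Fin.castAdd (na₁ + nc₁) j)) : ℕ), by simp⟩ : Fin nb₁)
          = j := by ext; simp
      rw [hj, hw]
      conv_lhs => rw [← hF2 (e j)]
      exact hT (F (0, e j)) 0 0 0 0
    have hv2 : ∀ i : Fin na₁, vT (Fin.natAdd nb₁ (Fin.castAdd nc₁ i)) = (0, (a1 i, 0)) := by
      intro i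
      rw [hvT]
      simp only [Basis.coe_reindex, Basis.map_apply, Function.comp_apply,
        finCongr_symm, finCongr_apply]
      rw [prodBasis_of_ge _ _ _ (by simp), prodBasis_of_lt _ _ _ (by simp)]
      have hj : (⟨((Fin.cast hN.symm (Fin.natAdd nb₁ (Fin.castAdd nc₁ i))) : ℕ) - nb₁,
          by simp⟩ : Fin na₁) = i := by ext; simp
      rw [hj]
      have h := hT 0 (a1 i) 0 0 0
      rw [map_zero, map_zero] at h
      exact h
    have hv3 : ∀ k : Fin nc₁, vT (Fin.natAdd nb₁ (Fin.natAdd na₁ k)) = (0, (0, c1 k)) := by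
      intro k
      rw [hvT]
      simp only [Basis.coe_reindex, Basis.map_apply, Function.comp_apply,
        finCongr_symm, finCongr_apply]
      rw [prodBasis_of_ge _ _ _ (by simp), prodBasis_of_ge _ _ _ (by simp),
        prodBasis_of_lt _ _ _ (by simp)]
      have hj : (⟨((Fin.cast hN.symm (Fin.natAdd nb₁ (Fin.natAdd na₁ k)) : ℕ) - nb₁ - na₁),
          by simp⟩ : Fin nc₁) = k := by ext; simp
      rw [hj]
      have h := hT 0 0 (c1 k) 0 0
      rw [map_zero, map_zero] at h
      exact h
    have hDgoal : (prodBasis b1 (prodBasis a1 c1)).det vT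
        = b1.det w * (1 * 1) := by
      rw [prodBasis_det_block₁ _ _ _ (fun j => by rw [hv1 j])]
      have e1 : (fun j => (vT (Fin.castAdd (na₁ + nc₁) j)).1) = w :=
        funext fun j => by rw [hv1 j]
      rw [e1]
      congr 1
      rw [prodBasis_det_block₁ _ _ _ (fun i => by rw [hv2 i])]
      have e2 : (fun i => ((fun j => (vT (Fin.natAdd nb₁ j)).2) (Fin.castAdd nc₁ i)).1) = ⇑a1 :=
        funext fun i => by simp only []; rw [hv2 i]
      have e3 : (fun k => ((fun j => (vT (Fin.natAdd nb₁ j)).2) (Fin.natAdd na₁ k)).2) = ⇑c1 :=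
        funext fun k => by simp only []; rw [hv3 k]
      rw [e2, e3, Basis.det_self, Basis.det_self]
    -- chains
    have c2h : b2.det ⇑a2 = b2.det ⇑bb * bb.det ⇑a2 := det_chain b2 bb ⇑a2
    have c4h : bb.det ⇑a2 * a2.det ⇑bb = 1 := det_one_chain bb a2
    have hYne : a2.det ⇑bb ≠ 0 := (a2.isUnit_det bb).ne_zero
    have hY2 : 0 < a2.det ⇑bb * a2.det ⇑bb := mul_self_pos.mpr hYne
    rw [hd] at h9
    rw [h5, h9]
    rw [c2h] at EQ2
    have hp := parity_right nb₁ nid'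
    rcases Nat.even_or_odd (nb₁ * nid' + nid') with hE | hE
    · have hE' := Nat.even_iff.mp hE
      rw [hE.neg_one_pow, one_mul] at EQ2
      have key : (b1.det w * (1 * 1)) * ((b2.det ⇑bb * (a2.det ⇑bb * 1)) * a2.det U)
          = ((prodBasis b1 b2).det vF) * (a2.det ⇑bb * a2.det ⇑bb) := by
        linear_combination (-(a2.det ⇑bb * a2.det ⇑bb)) * EQ2
          + (-(b1.det w * b2.det ⇑bb * a2.det ⇑bb * a2.det U)) * c4h
      by_cases hC : (nid' * (nid' + 1) / 2) % 2 = 0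
      · rw [if_pos hC] at hBeq
        rw [Basis.orientation_eq_iff_det_pos, hdet_eq] at hBeq
        rw [if_pos (by omega)]
        rw [← Basis.orientation_map, ← Basis.orientation_reindex, eq_comm,
          Basis.orientation_eq_iff_det_pos]
        rw [show ⇑(((prodBasis e (prodBasis a1 (prodBasis c1 (prodBasis c2 z)))).map T).reindex
          (finCongr hN)) = vT from hvT.symm, hDgoal]
        nlinarith [key, mul_pos h7' hY2, mul_pos hBeq hDG]
      · rw [if_neg hC] at hBeq
        rw [orientation_eq_neg_iff_det_neg, hdet_eq] at hBeq
        rw [if_neg (by omega)]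
        rw [Orientation.map_neg, Orientation.reindex_neg]
        rw [← Basis.orientation_map, ← Basis.orientation_reindex, eq_comm,
          orientation_eq_neg_iff_det_neg]
        rw [show ⇑(((prodBasis e (prodBasis a1 (prodBasis c1 (prodBasis c2 z)))).map T).reindex
          (finCongr hN)) = vT from hvT.symm, hDgoal]
        nlinarith [key, mul_pos h7' hY2, mul_neg_of_neg_of_pos hBeq hDG]
    · have hE' := Nat.odd_iff.mp hE
      rw [hE.neg_one_pow, neg_one_mul] at EQ2
      have key : (b1.det w * (1 * 1)) * ((b2.det ⇑bb * (a2.det ⇑bb * 1)) * a2.det U)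
          = -(((prodBasis b1 b2).det vF) * (a2.det ⇑bb * a2.det ⇑bb)) := by
        linear_combination (a2.det ⇑bb * a2.det ⇑bb) * EQ2
          + (-(b1.det w * b2.det ⇑bb * a2.det ⇑bb * a2.det U)) * c4h
      by_cases hC : (nid' * (nid' + 1) / 2) % 2 = 0
      · rw [if_pos hC] at hBeq
        rw [Basis.orientation_eq_iff_det_pos, hdet_eq] at hBeq
        rw [if_neg (by omega)]
        rw [Orientation.map_neg, Orientation.reindex_neg]
        rw [← Basis.orientation_map, ← Basis.orientation_reindex, eq_comm,
          orientation_eq_neg_iff_det_neg]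
        rw [show ⇑(((prodBasis e (prodBasis a1 (prodBasis c1 (prodBasis c2 z)))).map T).reindex
          (finCongr hN)) = vT from hvT.symm, hDgoal]
        nlinarith [key, mul_pos h7' hY2, mul_pos hBeq hDG]
      · rw [if_neg hC] at hBeq
        rw [orientation_eq_neg_iff_det_neg, hdet_eq] at hBeq
        rw [if_pos (by omega)]
        rw [← Basis.orientation_map, ← Basis.orientation_reindex, eq_comm,
          Basis.orientation_eq_iff_det_pos]
        rw [show ⇑(((prodBasis e (prodBasis a1 (prodBasis c1 (prodBasis c2 z)))).map T).reindex
          (finCongr hN)) = vT from hvT.symm, hDgoal]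
        nlinarith [key, mul_pos h7' hY2, mul_neg_of_neg_of_pos hBeq hDG]


end
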